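/- Let S be a nonempty finite set of cardinality m, and let s₁, …, s_T ∈ S be any sequence. Define the counts N_t(s) = 1 + #{ u < t : s_u = s }. Then Σ_{t=1}^T 1/√(N_t(s_t)) ≤ 2 √(m T). -/

import Mathlib

open Finset

private lemma aux_step (n : ℕ) :
    (1 : ℝ) / Real.sqrt (1 + n) ≤ 2 * Real.sqrt (n + 1) - 2 * Real.sqrt n := by
  have h1 : (0:ℝ) ≤ (n:ℝ) := Nat.cast_nonneg n
  have h2 : (0:ℝ) ≤ (n:ℝ) + 1 := by linarith
  have s1 : Real.sqrt n ^ 2 = n := Real.sq_sqrt h1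
  have s2 : Real.sqrt ((n:ℝ) + 1) ^ 2 = (n:ℝ) + 1 := Real.sq_sqrt h2
  have hpos : 0 < Real.sqrt ((n:ℝ) + 1) := Real.sqrt_pos.2 (by linarith)
  have hle : Real.sqrt (n:ℝ) ≤ Real.sqrt ((n:ℝ)+1) := Real.sqrt_le_sqrt (by linarith)
  have hnn : 0 ≤ Real.sqrt (n:ℝ) := Real.sqrt_nonneg _
  have key : (1:ℝ) / Real.sqrt ((n:ℝ) + 1) ≤ 2 * Real.sqrt ((n:ℝ)+1) - 2 * Real.sqrt n := by
    rw [div_le_iff₀ hpos]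
    nlinarith [s1, s2, hpos, hle, hnn]
  have h : (1:ℝ) + n = (n:ℝ) + 1 := by ring
  rw [h]
  exact key

private lemma aux_main {S : Type*} [Fintype S] [DecidableEq S] (s : ℕ → S) (T : ℕ) :
    ∑ t ∈ range T, (1 : ℝ) / Real.sqrt (1 + (((range t).filter fun u => s u = s t).card : ℝ))
      ≤ ∑ a : S, 2 * Real.sqrt ((((range T).filter fun u => s u = a).card : ℝ)) := by
  induction T with
  | zero => simp
  | succ T ih =>
    rw [Finset.sum_range_succ]
    set c : S → ℕ := fun a => ((range T).filter fun u => s u = a).card with hc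
    have hsplit : ∀ a : S, ((range (T+1)).filter fun u => s u = a).card
        = c a + (if a = s T then 1 else 0) := by
      intro a
      rw [Finset.range_add_one, Finset.filter_insert]
      by_cases h : s T = a
      · simp [h, Finset.mem_filter, hc]
      · simp [h, Ne.symm h, hc]
    have hrhs : ∑ a : S, 2 * Real.sqrt ((((range (T+1)).filter fun u => s u = a).card : ℝ))
        = ∑ a : S, 2 * Real.sqrt ((c a : ℝ))
          + (2 * Real.sqrt ((c (s T) : ℝ) + 1) - 2 * Real.sqrt ((c (s T) : ℝ))) := by
      have : ∀ a : S, 2 * Real.sqrt ((((range (T+1)).filter fun u => s u = a).card : ℝ))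
          = 2 * Real.sqrt ((c a : ℝ))
            + (if a = s T then 2 * Real.sqrt ((c (s T) : ℝ) + 1) - 2 * Real.sqrt ((c (s T) : ℝ)) else 0) := by
        intro a
        rw [hsplit a]
        by_cases h : a = s T
        · subst h; push_cast
          rw [if_pos rfl, add_comm ((c (s T)):ℝ) 1]
          simp only [if_true]
          ring
        · simp [h]
      rw [Finset.sum_congr rfl fun a _ => this a, Finset.sum_add_distrib,
        Finset.sum_ite_eq' Finset.univ (s T)]
      simp
    rw [hrhs]
    have := aux_step (c (s T))
    linarith

theorem stmt_16 {S : Type*} [Fintype S] [Nonempty S] [DecidableEq S]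
    (m T : ℕ) (hm : Fintype.card S = m) (s : Fin T → S) :
    ∑ t : Fin T,
        (1 : ℝ) / Real.sqrt (1 + ((Finset.univ.filter fun u : Fin T => u < t ∧ s u = s t).card : ℝ))
      ≤ 2 * Real.sqrt ((m : ℝ) * (T : ℝ)) := by
  classical
  set s' : ℕ → S := fun n => if h : n < T then s ⟨n, h⟩ else Classical.arbitrary S with hs'
  have hs'eq : ∀ t : Fin T, s' t.val = s t := by
    intro t; simp [hs', t.isLt]
  have hcard : ∀ t : Fin T,
      (Finset.univ.filter fun u : Fin T => u < t ∧ s u = s t).card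
        = ((range t.val).filter fun u => s' u = s' t.val).card := by
    intro t
    apply Finset.card_bij (fun u _ => u.val)
    · intro u hu
      simp only [Finset.mem_filter, Finset.mem_univ, true_and] at hu
      simp only [Finset.mem_filter, Finset.mem_range]
      exact ⟨hu.1, by rw [hs'eq u, hs'eq t]; exact hu.2⟩
    · intro a ha b hb h; exact Fin.ext h
    · intro b hb
      simp only [Finset.mem_filter, Finset.mem_range] at hb
      refine ⟨⟨b, lt_trans hb.1 t.isLt⟩, ?_, rfl⟩
      simp only [Finset.mem_filter, Finset.mem_univ, true_and]
      exact ⟨hb.1, by rw [← hs'eq ⟨b, _⟩, ← hs'eq t]; exact hb.2⟩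
  have h1 : ∑ t : Fin T,
      (1 : ℝ) / Real.sqrt (1 + ((Finset.univ.filter fun u : Fin T => u < t ∧ s u = s t).card : ℝ))
      = ∑ t ∈ range T, (1 : ℝ) / Real.sqrt (1 + (((range t).filter fun u => s' u = s' t).card : ℝ)) := by
    rw [← Fin.sum_univ_eq_sum_range]
    exact Finset.sum_congr rfl fun t _ => by rw [hcard t]
  rw [h1]
  refine (aux_main s' T).trans ?_
  rw [← Finset.mul_sum]
  have hCS : ∑ a : S, Real.sqrt ((((range T).filter fun u => s' u = a).card : ℝ))
      ≤ Real.sqrt ((m : ℝ) * T) := by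
    have := Real.sum_sqrt_mul_sqrt_le (Finset.univ : Finset S)
      (f := fun _ : S => (1:ℝ)) (g := fun a : S => (((range T).filter fun u => s' u = a).card : ℝ))
      (fun _ => zero_le_one) (fun a => Nat.cast_nonneg _)
    simp only [Real.sqrt_one, one_mul] at this
    have hsum : ∑ a : S, ((((range T).filter fun u => s' u = a).card : ℝ)) = (T : ℝ) := by
      rw [← Nat.cast_sum]
      norm_cast
      rw [← Finset.card_eq_sum_card_fiberwise (f := s') (t := Finset.univ)
        (fun x _ => Finset.mem_univ _)]
      simp
    have hcardS : ∑ _a : S, (1:ℝ) = (m : ℝ) := by simp [hm]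
    rw [hsum, hcardS] at this
    calc ∑ a : S, Real.sqrt ((((range T).filter fun u => s' u = a).card : ℝ))
        ≤ Real.sqrt (m : ℝ) * Real.sqrt (T : ℝ) := this
      _ = Real.sqrt ((m : ℝ) * T) := (Real.sqrt_mul (Nat.cast_nonneg m) _).symm
  linarith
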